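/- A word w lies in C(m(m-1)⋯1) if and only if every entry in the first m rows of P(w) is at most m. -/

import Mathlib

namespace Plactic

/-- Insert `x` into a weakly increasing row, returning the new row and the bumped entry. -/
def rowInsert (x : ℕ) : List ℕ → List ℕ × Option ℕ
  | [] => ([x], none)
  | y :: ys =>
    if x < y then (x :: ys, some y)
    else
      let p := rowInsert x ys
      (y :: p.1, p.2)

/-- RSK insertion of `x` into a tableau given as a list of rows. -/
def tInsert (x : ℕ) : List (List ℕ) → List (List ℕ)
  | [] => [[x]]
  | r :: rs =>
    match rowInsert x r with
    | (r', none) => r' :: rs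
    | (r', some y) => r' :: tInsert y rs

/-- The RSK insertion tableau of a word. -/
def P (w : List ℕ) : List (List ℕ) := w.foldl (fun t x => tInsert x t) []

/-- The `i`-th row (0-indexed) of the insertion tableau of `w`. -/
def row (w : List ℕ) (i : ℕ) : List ℕ := (P w).getD i []

/-- The `j`-th column (0-indexed) of a tableau, read top to bottom. -/
def col (T : List (List ℕ)) (j : ℕ) : List ℕ := T.filterMap (fun r => r[j]?)

/-- An elementary Knuth transposition. -/
inductive KStep : List ℕ → List ℕ → Prop
  | k1 (x y : List ℕ) (a b c : ℕ) : a ≤ b → b < c →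
      KStep (x ++ [a, c, b] ++ y) (x ++ [c, a, b] ++ y)
  | k2 (x y : List ℕ) (a b c : ℕ) : a < b → b ≤ c →
      KStep (x ++ [b, a, c] ++ y) (x ++ [b, c, a] ++ y)

/-- Knuth equivalence: the equivalence relation generated by Knuth transpositions. -/
def KEquiv : List ℕ → List ℕ → Prop := Relation.EqvGen KStep

/-- The centralizer of `u` in the plactic monoid. -/
def Cent (u : List ℕ) : Set (List ℕ) := {w | KEquiv (u ++ w) (w ++ u)}

/-! ### basic rowInsert lemmas -/

lemma rowInsert_app (x : ℕ) (E : List ℕ) (hE : ∀ e ∈ E, e ≤ x) :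
    rowInsert x E = (E ++ [x], none) := by
  induction E with
  | nil => simp [rowInsert]
  | cons e E ih =>
      have h1 : ¬ x < e := not_lt.2 (hE e (by simp))
      simp [rowInsert, h1, ih (fun e he => hE e (by simp [he]))]

lemma rowInsert_bump (x y : ℕ) (E F : List ℕ) (hE : ∀ e ∈ E, e ≤ x) (hy : x < y) :
    rowInsert x (E ++ y :: F) = (E ++ x :: F, some y) := by
  induction E with
  | nil => simp [rowInsert, hy]
  | cons e E ih =>
      have h1 : ¬ x < e := not_lt.2 (hE e (by simp))
      simp [rowInsert, h1, ih (fun e he => hE e (by simp [he]))]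

lemma tInsert_app (x : ℕ) (R : List ℕ) (rs : List (List ℕ)) (hR : ∀ e ∈ R, e ≤ x) :
    tInsert x (R :: rs) = (R ++ [x]) :: rs := by
  simp [tInsert, rowInsert_app x R hR]

lemma tInsert_bump' {R E F : List ℕ} {x y : ℕ} (hR : R = E ++ y :: F)
    (hE : ∀ e ∈ E, e ≤ x) (hy : x < y) (rs : List (List ℕ)) :
    tInsert x (R :: rs) = (E ++ x :: F) :: tInsert y rs := by
  subst hR; simp [tInsert, rowInsert_bump x y E F hE hy]

lemma rowInsert_mem {R : List ℕ} {x v : ℕ} (h : v ∈ (rowInsert x R).1) :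
    v = x ∨ v ∈ R := by
  induction R with
  | nil => simp [rowInsert] at h; exact .inl h
  | cons r R ih =>
      by_cases hx : x < r
      · rw [show rowInsert x (r :: R) = (x :: R, some r) from by simp [rowInsert, hx]] at h
        rcases List.mem_cons.1 h with h | h
        exacts [.inl h, .inr (by simp [h])]
      · rw [show (rowInsert x (r :: R)).1 = r :: (rowInsert x R).1 from by
          simp [rowInsert, hx]] at h
        rcases List.mem_cons.1 h with h | h
        · exact .inr (by simp [h])
        · rcases ih h with h | h
          exacts [.inl h, .inr (by simp [h])]

lemma rowInsert_snd_gt {R : List ℕ} {x y : ℕ} (h : (rowInsert x R).2 = some y) :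
    x < y := by
  induction R with
  | nil => simp [rowInsert] at h
  | cons r R ih =>
      by_cases hx : x < r
      · simp [rowInsert, hx] at h; omega
      · simp [rowInsert, hx] at h; exact ih h

lemma rowInsert_bumps {R : List ℕ} {x : ℕ} (h : ∃ r ∈ R, x < r) :
    ∃ R' y, rowInsert x R = (R', some y) ∧ R'.length = R.length ∧ x ∈ R' := by
  induction R with
  | nil => simp at h
  | cons r R ih =>
      by_cases hx : x < r
      · exact ⟨x :: R, r, by simp [rowInsert, hx], by simp, by simp⟩
      · obtain ⟨r', hr', hxr'⟩ := h
        rcases List.mem_cons.1 hr' with h | h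
        · omega
        · obtain ⟨R', y, h1, h2, h3⟩ := ih ⟨r', h, hxr'⟩
          exact ⟨r :: R', y, by simp [rowInsert, hx, h1], by simp [h2], by simp [h3]⟩

/-- split a sorted list at a threshold -/
lemma sorted_split (R : List ℕ) (x : ℕ) (hs : R.Pairwise (· ≤ ·)) :
    (∀ r ∈ R, r ≤ x) ∨ ∃ L y Rr, R = L ++ y :: Rr ∧ (∀ l ∈ L, l ≤ x) ∧ x < y ∧
      L.Pairwise (· ≤ ·) ∧ Rr.Pairwise (· ≤ ·) ∧ (∀ r ∈ Rr, y ≤ r) := by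
  induction R with
  | nil => exact .inl (by simp)
  | cons r R ih =>
      rw [List.pairwise_cons] at hs
      by_cases hx : x < r
      · exact .inr ⟨[], r, R, by simp, by simp, hx, by simp, hs.2, hs.1⟩
      · rcases ih hs.2 with h | ⟨L, y, Rr, h1, h2, h3, h4, h5, h6⟩
        · exact .inl (by
            intro a ha; rcases List.mem_cons.1 ha with h' | h'
            · omega
            · exact h a h')
        · refine .inr ⟨r :: L, y, Rr, by simp [h1], ?_, h3, ?_, h5, h6⟩
          · intro l hl; rcases List.mem_cons.1 hl with h' | h'
            · omega
            · exact h2 l h'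
          · rw [List.pairwise_cons]
            exact ⟨fun b hb => hs.1 b (by rw [h1]; exact List.mem_append_left _ hb), h4⟩

lemma rowInsert_fst_sorted {R : List ℕ} {x : ℕ} (hs : R.Pairwise (· ≤ ·)) :
    (rowInsert x R).1.Pairwise (· ≤ ·) := by
  rcases sorted_split R x hs with h | ⟨L, y, Rr, h1, h2, h3, h4, h5, h6⟩
  · rw [rowInsert_app x R h]
    rw [List.pairwise_append]
    exact ⟨hs, by simp, fun a ha b hb => by simp at hb; subst hb; exact h a ha⟩
  · rw [h1, rowInsert_bump x y L Rr h2 h3]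
    rw [List.pairwise_append]
    refine ⟨h4, List.pairwise_cons.2 ⟨fun b hb => le_trans h3.le (h6 b hb), h5⟩, ?_⟩
    intro a ha b hb
    rcases List.mem_cons.1 hb with h' | h'
    · subst h'; exact h2 a ha
    · exact le_trans (h2 a ha) (le_trans h3.le (h6 b h'))

lemma tInsert_sorted {T : List (List ℕ)} {x : ℕ} (hT : ∀ r ∈ T, r.Pairwise (· ≤ ·)) :
    ∀ r ∈ tInsert x T, r.Pairwise (· ≤ ·) := by
  induction T generalizing x with
  | nil => simp [tInsert]
  | cons R rs ih =>
      have hR := hT R (by simp)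
      have hrs : ∀ r ∈ rs, r.Pairwise (· ≤ ·) := fun r hr => hT r (by simp [hr])
      intro r hr
      rw [tInsert] at hr
      rcases hh : rowInsert x R with ⟨r', o⟩
      rcases o with _ | y
      · rw [hh] at hr
        rcases List.mem_cons.1 hr with h | h
        · subst h; have := rowInsert_fst_sorted (x := x) hR; rwa [hh] at this
        · exact hrs r h
      · rw [hh] at hr
        rcases List.mem_cons.1 hr with h | h
        · subst h; have := rowInsert_fst_sorted (x := x) hR; rwa [hh] at this
        · exact ih hrs r h


/-! ### KEquiv infrastructure -/

lemma KEquiv.refl (w : List ℕ) : KEquiv w w := Relation.EqvGen.refl w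

lemma KEquiv.symm {v w : List ℕ} (h : KEquiv v w) : KEquiv w v := Relation.EqvGen.symm _ _ h

lemma KEquiv.trans {u v w : List ℕ} (h1 : KEquiv u v) (h2 : KEquiv v w) : KEquiv u w :=
  Relation.EqvGen.trans _ _ _ h1 h2

lemma KEquiv.of_step {v w : List ℕ} (h : KStep v w) : KEquiv v w := Relation.EqvGen.rel _ _ h

lemma KEquiv.cast {a b a' b' : List ℕ} (h : KEquiv a b) (ha : a = a') (hb : b = b') :
    KEquiv a' b' := ha ▸ hb ▸ h

lemma KStep.append_left {v w : List ℕ} (p : List ℕ) (h : KStep v w) : KStep (p ++ v) (p ++ w) := by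
  cases h with
  | k1 x y a b c h1 h2 =>
      have := KStep.k1 (p ++ x) y a b c h1 h2
      simpa using this
  | k2 x y a b c h1 h2 =>
      have := KStep.k2 (p ++ x) y a b c h1 h2
      simpa using this

lemma KStep.append_right {v w : List ℕ} (p : List ℕ) (h : KStep v w) : KStep (v ++ p) (w ++ p) := by
  cases h with
  | k1 x y a b c h1 h2 =>
      have := KStep.k1 x (y ++ p) a b c h1 h2
      simpa using this
  | k2 x y a b c h1 h2 =>
      have := KStep.k2 x (y ++ p) a b c h1 h2
      simpa using this

lemma KEquiv.append_left (p : List ℕ) {v w : List ℕ} (h : KEquiv v w) :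
    KEquiv (p ++ v) (p ++ w) := by
  induction h with
  | rel a b hab => exact .of_step (hab.append_left p)
  | refl a => exact .refl _
  | symm a b _ ih => exact ih.symm
  | trans a b c _ _ ih1 ih2 => exact ih1.trans ih2

lemma KEquiv.append_right (p : List ℕ) {v w : List ℕ} (h : KEquiv v w) :
    KEquiv (v ++ p) (w ++ p) := by
  induction h with
  | rel a b hab => exact .of_step (hab.append_right p)
  | refl a => exact .refl _
  | symm a b _ ih => exact ih.symm
  | trans a b c _ _ ih1 ih2 => exact ih1.trans ih2

/-! ### reading word -/

def readT : List (List ℕ) → List ℕ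
  | [] => []
  | r :: rs => readT rs ++ r

lemma kML (u : ℕ) (S : List ℕ) (x : ℕ) (hxu : x < u) (hS : ∀ s ∈ S, u ≤ s)
    (hs : S.Pairwise (· ≤ ·)) : KEquiv (u :: (S ++ [x])) (u :: x :: S) := by
  induction S generalizing u with
  | nil => exact .refl _
  | cons s S ih =>
      rw [List.pairwise_cons] at hs
      have hus : u ≤ s := hS s (by simp)
      have h1 : KEquiv (s :: (S ++ [x])) (s :: x :: S) :=
        ih s (lt_of_lt_of_le hxu hus) hs.1 hs.2
      have h2 : KEquiv (u :: s :: (S ++ [x])) (u :: s :: x :: S) := h1.append_left [u]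
      have step : KStep ([] ++ [u, x, s] ++ S) ([] ++ [u, s, x] ++ S) :=
        KStep.k2 [] S x u s hxu hus
      have h3 : KEquiv (u :: s :: x :: S) (u :: x :: s :: S) :=
        (KEquiv.of_step step).symm.cast (by simp) (by simp)
      exact h2.trans h3

lemma kMY (L : List ℕ) (y t : ℕ) (Rr : List ℕ) (hL : ∀ l ∈ L, l ≤ t) (ht : t < y)
    (hLs : L.Pairwise (· ≤ ·)) : KEquiv (L ++ y :: t :: Rr) (y :: (L ++ t :: Rr)) := by
  induction L using List.reverseRecOn generalizing t Rr with
  | nil => exact .refl _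
  | append_singleton L' l ih =>
      rw [List.pairwise_append] at hLs
      have hlt : l ≤ t := hL l (by simp)
      have step : KStep (L' ++ [l, y, t] ++ Rr) (L' ++ [y, l, t] ++ Rr) :=
        KStep.k1 L' Rr l t y hlt ht
      have h1 : KEquiv (L' ++ [l] ++ y :: t :: Rr) (L' ++ y :: l :: t :: Rr) :=
        (KEquiv.of_step step).cast (by simp) (by simp)
      have h2 : KEquiv (L' ++ y :: l :: t :: Rr) (y :: (L' ++ l :: t :: Rr)) :=
        ih l (t :: Rr) (fun a ha => hLs.2.2 a ha l (by simp)) (lt_of_le_of_lt hlt ht) hLs.1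
      exact (h1.trans h2).cast (by simp) (by simp)

lemma kRowBump (L : List ℕ) (y : ℕ) (Rr : List ℕ) (x : ℕ) (hL : ∀ l ∈ L, l ≤ x) (hxy : x < y)
    (hLs : L.Pairwise (· ≤ ·)) (hRr : Rr.Pairwise (· ≤ ·)) (hyRr : ∀ r ∈ Rr, y ≤ r) :
    KEquiv ((L ++ y :: Rr) ++ [x]) (y :: (L ++ x :: Rr)) := by
  have h1 : KEquiv (y :: (Rr ++ [x])) (y :: x :: Rr) := kML y Rr x hxy hyRr hRr
  have h2 : KEquiv ((L ++ y :: Rr) ++ [x]) (L ++ y :: x :: Rr) :=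
    (h1.append_left L).cast (by simp) (by simp)
  have h3 := kMY L y x Rr hL hxy hLs
  exact h2.trans h3

lemma kRead (T : List (List ℕ)) (x : ℕ) (hT : ∀ r ∈ T, r.Pairwise (· ≤ ·)) :
    KEquiv (readT (tInsert x T)) (readT T ++ [x]) := by
  induction T generalizing x with
  | nil => exact .refl _
  | cons R rs ih =>
      have hR := hT R (by simp)
      have hrs : ∀ r ∈ rs, r.Pairwise (· ≤ ·) := fun r hr => hT r (by simp [hr])
      rcases sorted_split R x hR with h | ⟨L, y, Rr, h1, h2, h3, h4, h5, h6⟩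
      · rw [tInsert_app x R rs h]
        exact (KEquiv.refl _).cast rfl (by simp [readT])
      · rw [tInsert_bump' h1 h2 h3 rs]
        have ihy : KEquiv (readT (tInsert y rs)) (readT rs ++ [y]) := ih y hrs
        have s1 : KEquiv (readT (tInsert y rs) ++ (L ++ x :: Rr))
            ((readT rs ++ [y]) ++ (L ++ x :: Rr)) := ihy.append_right _
        have s2 : KEquiv ((L ++ y :: Rr) ++ [x]) (y :: (L ++ x :: Rr)) :=
          kRowBump L y Rr x h2 h3 h4 h5 h6
        have s3 : KEquiv ((readT rs ++ [y]) ++ (L ++ x :: Rr)) ((readT rs ++ R) ++ [x]) :=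
          (s2.symm.append_left (readT rs)).cast (by simp) (by simp [h1])
        exact (s1.trans s3).cast (by simp [readT]) (by simp [readT])

/-! ### tInsertW and P -/

def tInsertW (w : List ℕ) (T : List (List ℕ)) : List (List ℕ) :=
  w.foldl (fun t x => tInsert x t) T

@[simp] lemma tInsertW_nil (T : List (List ℕ)) : tInsertW [] T = T := rfl

lemma tInsertW_append (v w : List ℕ) (T : List (List ℕ)) :
    tInsertW (v ++ w) T = tInsertW w (tInsertW v T) := List.foldl_append

lemma tInsertW_snoc (v : List ℕ) (x : ℕ) (T : List (List ℕ)) :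
    tInsertW (v ++ [x]) T = tInsert x (tInsertW v T) := by
  rw [tInsertW_append]; rfl

lemma P_eq (w : List ℕ) : P w = tInsertW w [] := rfl

lemma P_append (v w : List ℕ) : P (v ++ w) = tInsertW w (P v) := List.foldl_append

lemma tInsertW_sorted {T : List (List ℕ)} (w : List ℕ) (hT : ∀ r ∈ T, r.Pairwise (· ≤ ·)) :
    ∀ r ∈ tInsertW w T, r.Pairwise (· ≤ ·) := by
  induction w generalizing T with
  | nil => exact hT
  | cons x w ih => exact ih (tInsert_sorted hT)

lemma P_sorted (w : List ℕ) : ∀ r ∈ P w, r.Pairwise (· ≤ ·) :=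
  tInsertW_sorted w (by simp)

lemma kReadP (w : List ℕ) : KEquiv w (readT (P w)) := by
  induction w using List.reverseRecOn with
  | nil => exact .refl _
  | append_singleton v x ih =>
      have h1 : KEquiv (readT (tInsert x (P v))) (readT (P v) ++ [x]) :=
        kRead (P v) x (P_sorted v)
      have h2 : KEquiv (v ++ [x]) (readT (P v) ++ [x]) := ih.append_right [x]
      have h3 : P (v ++ [x]) = tInsert x (P v) := P_append v [x]
      exact (h2.trans h1.symm).cast rfl (by rw [h3])


/-! ### helpers for membership bounds -/

lemma all_le_trans {L : List ℕ} {x y : ℕ} (h : ∀ l ∈ L, l ≤ x) (hxy : x ≤ y) :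
    ∀ l ∈ L, l ≤ y := fun l hl => le_trans (h l hl) hxy

lemma all_le_append {A B : List ℕ} {x : ℕ} (hA : ∀ l ∈ A, l ≤ x) (hB : ∀ l ∈ B, l ≤ x) :
    ∀ l ∈ A ++ B, l ≤ x := by
  intro l hl; rcases List.mem_append.1 hl with h | h
  exacts [hA l h, hB l h]

lemma all_le_cons {B : List ℕ} {x a : ℕ} (ha : a ≤ x) (hB : ∀ l ∈ B, l ≤ x) :
    ∀ l ∈ a :: B, l ≤ x := by
  intro l hl; rcases List.mem_cons.1 hl with h | h
  · omega
  · exact hB l h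

lemma all_le_nil (x : ℕ) : ∀ l ∈ ([] : List ℕ), l ≤ x := by simp

lemma all_le_single {x a : ℕ} (ha : a ≤ x) : ∀ l ∈ [a], l ≤ x := by simpa using ha

/-! ### Knuth invariance of insertion (the key lemma) -/

lemma key (T : List (List ℕ)) (hT : ∀ r ∈ T, r.Pairwise (· ≤ ·)) :
    (∀ a b c : ℕ, a ≤ b → b < c →
      tInsert b (tInsert c (tInsert a T)) = tInsert b (tInsert a (tInsert c T))) ∧
    (∀ a b c : ℕ, a < b → b ≤ c →
      tInsert c (tInsert a (tInsert b T)) = tInsert a (tInsert c (tInsert b T))) := by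
  induction T with
  | nil =>
      constructor
      · intro a b c hab hbc
        rw [show tInsert a ([] : List (List ℕ)) = [a] :: [] from rfl,
            tInsert_app c [a] [] (all_le_single (by omega)),
            tInsert_bump' (show [a] ++ [c] = [a] ++ c :: [] from rfl)
              (all_le_single (by omega)) hbc [],
            show tInsert c ([] : List (List ℕ)) = [c] :: [] from rfl,
            tInsert_bump' (show [c] = [] ++ c :: [] from rfl) (all_le_nil a) (by omega) [],
            tInsert_app b ([] ++ a :: []) (tInsert c []) (all_le_cons hab (all_le_nil b))]
        all_goals simp [tInsert, rowInsert]
      · intro a b c hab hbc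
        rw [show tInsert b ([] : List (List ℕ)) = [b] :: [] from rfl,
            tInsert_bump' (show [b] = [] ++ b :: [] from rfl) (all_le_nil a) hab [],
            tInsert_app c ([] ++ a :: []) (tInsert b [])
              (all_le_cons (by omega) (all_le_nil c)),
            tInsert_app c [b] [] (all_le_single hbc),
            tInsert_bump' (show [b] ++ [c] = [] ++ b :: [c] from rfl) (all_le_nil a) hab []]
        all_goals simp [tInsert, rowInsert]
  | cons R rs IH =>
      have hR : R.Pairwise (· ≤ ·) := hT R (by simp)
      have hrs : ∀ r ∈ rs, r.Pairwise (· ≤ ·) := fun r hr => hT r (by simp [hr])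
      obtain ⟨IH1, IH2⟩ := IH hrs
      constructor
      · -- k1 : insert a, c, b  vs  c, a, b   (a ≤ b < c)
        intro a b c hab hbc
        rcases sorted_split R a hR with hA | ⟨L, α, S, hR1, hL, haα, hLs, hSs, hαS⟩
        · -- Case A : everything ≤ a
          rw [tInsert_app a R rs hA,
              tInsert_app c (R ++ [a]) rs
                (all_le_append (all_le_trans hA (by omega)) (all_le_single (by omega))),
              tInsert_bump' (show (R ++ [a]) ++ [c] = (R ++ [a]) ++ c :: [] from rfl)
                (all_le_append (all_le_trans hA hab) (all_le_single hab)) hbc rs,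
              tInsert_app c R rs (all_le_trans hA (by omega)),
              tInsert_bump' (show R ++ [c] = R ++ c :: [] from rfl) hA (by omega) rs,
              tInsert_app b (R ++ a :: []) (tInsert c rs)
                (all_le_append (all_le_trans hA hab) (all_le_cons hab (all_le_nil b)))]
          all_goals simp
        · subst hR1
          have hLb : ∀ l ∈ L, l ≤ b := all_le_trans hL hab
          have hLc : ∀ l ∈ L, l ≤ c := all_le_trans hL (by omega)
          rcases sorted_split S c hSs with hSc | ⟨M, γ, S₂, hS1, hM, hcγ, hMs, hS₂s, hγS₂⟩
          · -- Case B1 : all of S ≤ c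
            by_cases hαc : α ≤ c
            · rcases sorted_split S b hSs with hSb | ⟨L', β, S', hS1, hL', hbβ, hL's, hS's, hβS'⟩
              · -- B1b : all of S ≤ b
                rw [tInsert_bump' (rfl : L ++ α :: S = L ++ α :: S) hL haα rs,
                    tInsert_app c (L ++ a :: S) (tInsert α rs)
                      (all_le_append hLc (all_le_cons (by omega) (all_le_trans hSc le_rfl))),
                    tInsert_bump' (show (L ++ a :: S) ++ [c] = (L ++ a :: S) ++ c :: [] from rfl)
                      (all_le_append hLb (all_le_cons hab hSb)) hbc (tInsert α rs),
                    tInsert_app c (L ++ α :: S) rs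
                      (all_le_append hLc (all_le_cons hαc hSc)),
                    tInsert_bump' (show (L ++ α :: S) ++ [c] = L ++ α :: (S ++ [c]) from by simp)
                      hL haα rs,
                    tInsert_bump'
                      (show L ++ a :: (S ++ [c]) = (L ++ a :: S) ++ c :: [] from by simp)
                      (all_le_append hLb (all_le_cons hab hSb)) hbc (tInsert α rs)]
                all_goals simp
              · -- B1a : S = L' ++ β :: S' with b < β
                subst hS1
                have hβc : β ≤ c := hSc β (by simp)
                have hS'c : ∀ s ∈ S', s ≤ c := fun s hs => hSc s (by simp [hs])
                have hL'c : ∀ s ∈ L', s ≤ c := fun s hs => hSc s (by simp [hs])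
                rw [tInsert_bump' (rfl : L ++ α :: (L' ++ β :: S') = L ++ α :: (L' ++ β :: S'))
                      hL haα rs,
                    tInsert_app c (L ++ a :: (L' ++ β :: S')) (tInsert α rs)
                      (all_le_append hLc (all_le_cons (by omega)
                        (all_le_append hL'c (all_le_cons hβc hS'c)))),
                    tInsert_bump'
                      (show (L ++ a :: (L' ++ β :: S')) ++ [c]
                        = (L ++ a :: L') ++ β :: (S' ++ [c]) from by simp)
                      (all_le_append hLb (all_le_cons hab hL')) hbβ (tInsert α rs),
                    tInsert_app c (L ++ α :: (L' ++ β :: S')) rs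
                      (all_le_append hLc (all_le_cons hαc
                        (all_le_append hL'c (all_le_cons hβc hS'c)))),
                    tInsert_bump'
                      (show (L ++ α :: (L' ++ β :: S')) ++ [c]
                        = L ++ α :: ((L' ++ β :: S') ++ [c]) from by simp)
                      hL haα rs,
                    tInsert_bump'
                      (show L ++ a :: ((L' ++ β :: S') ++ [c])
                        = (L ++ a :: L') ++ β :: (S' ++ [c]) from by simp)
                      (all_le_append hLb (all_le_cons hab hL')) hbβ (tInsert α rs)]
                all_goals simp
            · -- B1y : c < α, hence S = []
              have hSnil : S = [] := List.eq_nil_iff_forall_not_mem.2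
                (fun s hs => by have := hαS s hs; have := hSc s hs; omega)
              subst hSnil
              rw [tInsert_bump' (rfl : L ++ α :: [] = L ++ α :: []) hL haα rs,
                  tInsert_app c (L ++ a :: []) (tInsert α rs)
                    (all_le_append hLc (all_le_cons (by omega) (all_le_nil c))),
                  tInsert_bump' (show (L ++ a :: []) ++ [c] = (L ++ a :: []) ++ c :: [] from rfl)
                    (all_le_append hLb (all_le_cons hab (all_le_nil b))) hbc (tInsert α rs),
                  tInsert_bump' (rfl : L ++ α :: [] = L ++ α :: []) hLc (by omega) rs,
                  tInsert_bump' (rfl : L ++ c :: [] = L ++ c :: []) hL (by omega)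
                    (tInsert α rs),
                  tInsert_app b (L ++ a :: []) (tInsert c (tInsert α rs))
                    (all_le_append hLb (all_le_cons hab (all_le_nil b)))]
              all_goals simp
          · -- Case B2 : S = M ++ γ :: S₂ with c < γ
            subst hS1
            have hαγ : α ≤ γ := hαS γ (by simp)
            have hαM : ∀ s ∈ M, α ≤ s := fun s hs => hαS s (by simp [hs])
            by_cases hαc : α ≤ c
            · rcases sorted_split M b hMs with hMb | ⟨N, δ, N₂, hM1, hN, hbδ, hNs, hN₂s, hδN₂⟩
              · -- B2a-i : all of M ≤ b
                rw [tInsert_bump' (rfl : L ++ α :: (M ++ γ :: S₂) = L ++ α :: (M ++ γ :: S₂))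
                      hL haα rs,
                    tInsert_bump'
                      (show L ++ a :: (M ++ γ :: S₂) = (L ++ a :: M) ++ γ :: S₂ from by simp)
                      (all_le_append hLc (all_le_cons (by omega) hM)) hcγ (tInsert α rs),
                    tInsert_bump'
                      (show (L ++ a :: M) ++ c :: S₂ = (L ++ a :: M) ++ c :: S₂ from rfl)
                      (all_le_append hLb (all_le_cons hab hMb)) hbc
                      (tInsert γ (tInsert α rs)),
                    tInsert_bump'
                      (show L ++ α :: (M ++ γ :: S₂) = (L ++ α :: M) ++ γ :: S₂ from by simp)
                      (all_le_append hLc (all_le_cons hαc hM)) hcγ rs,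
                    tInsert_bump'
                      (show (L ++ α :: M) ++ c :: S₂ = L ++ α :: (M ++ c :: S₂) from by simp)
                      hL haα (tInsert γ rs),
                    tInsert_bump'
                      (show L ++ a :: (M ++ c :: S₂) = (L ++ a :: M) ++ c :: S₂ from by simp)
                      (all_le_append hLb (all_le_cons hab hMb)) hbc
                      (tInsert α (tInsert γ rs)),
                    IH1 α c γ hαc hcγ]
              · -- B2a-ii : M = N ++ δ :: N₂ with b < δ
                subst hM1
                have hδc : δ ≤ c := hM δ (by simp)
                have hαδ : α ≤ δ := hαM δ (by simp)
                have hNc : ∀ s ∈ N, s ≤ c := fun s hs => hM s (by simp [hs])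
                have hN₂c : ∀ s ∈ N₂, s ≤ c := fun s hs => hM s (by simp [hs])
                rw [tInsert_bump'
                      (rfl : L ++ α :: ((N ++ δ :: N₂) ++ γ :: S₂)
                        = L ++ α :: ((N ++ δ :: N₂) ++ γ :: S₂)) hL haα rs,
                    tInsert_bump'
                      (show L ++ a :: ((N ++ δ :: N₂) ++ γ :: S₂)
                        = (L ++ a :: (N ++ δ :: N₂)) ++ γ :: S₂ from by simp)
                      (all_le_append hLc (all_le_cons (by omega)
                        (all_le_append hNc (all_le_cons hδc hN₂c)))) hcγ (tInsert α rs),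
                    tInsert_bump'
                      (show (L ++ a :: (N ++ δ :: N₂)) ++ c :: S₂
                        = (L ++ a :: N) ++ δ :: (N₂ ++ c :: S₂) from by simp)
                      (all_le_append hLb (all_le_cons hab hN)) hbδ
                      (tInsert γ (tInsert α rs)),
                    tInsert_bump'
                      (show L ++ α :: ((N ++ δ :: N₂) ++ γ :: S₂)
                        = (L ++ α :: (N ++ δ :: N₂)) ++ γ :: S₂ from by simp)
                      (all_le_append hLc (all_le_cons hαc
                        (all_le_append hNc (all_le_cons hδc hN₂c)))) hcγ rs,
                    tInsert_bump'
                      (show (L ++ α :: (N ++ δ :: N₂)) ++ c :: S₂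
                        = L ++ α :: ((N ++ δ :: N₂) ++ c :: S₂) from by simp)
                      hL haα (tInsert γ rs),
                    tInsert_bump'
                      (show L ++ a :: ((N ++ δ :: N₂) ++ c :: S₂)
                        = (L ++ a :: N) ++ δ :: (N₂ ++ c :: S₂) from by simp)
                      (all_le_append hLb (all_le_cons hab hN)) hbδ
                      (tInsert α (tInsert γ rs)),
                    IH1 α δ γ hαδ (by omega)]
            · -- B2y : c < α, hence M = []
              have hMnil : M = [] := List.eq_nil_iff_forall_not_mem.2
                (fun s hs => by have := hαM s hs; have := hM s hs; omega)
              subst hMnil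
              rw [tInsert_bump' (rfl : L ++ α :: ([] ++ γ :: S₂) = L ++ α :: ([] ++ γ :: S₂))
                    hL haα rs,
                  tInsert_bump'
                    (show L ++ a :: ([] ++ γ :: S₂) = (L ++ a :: []) ++ γ :: S₂ from by simp)
                    (all_le_append hLc (all_le_cons (by omega) (all_le_nil c))) hcγ
                    (tInsert α rs),
                  tInsert_bump'
                    (show (L ++ a :: []) ++ c :: S₂ = (L ++ a :: []) ++ c :: S₂ from rfl)
                    (all_le_append hLb (all_le_cons hab (all_le_nil b))) hbc
                    (tInsert γ (tInsert α rs)),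
                  tInsert_bump'
                    (show L ++ α :: ([] ++ γ :: S₂) = L ++ α :: (γ :: S₂) from by simp)
                    hLc (by omega) rs,
                  tInsert_bump' (rfl : L ++ c :: (γ :: S₂) = L ++ c :: (γ :: S₂)) hL (by omega)
                    (tInsert α rs),
                  tInsert_bump'
                    (show L ++ a :: (γ :: S₂) = (L ++ a :: []) ++ γ :: S₂ from by simp)
                    (all_le_append hLb (all_le_cons hab (all_le_nil b))) (by omega)
                    (tInsert c (tInsert α rs)),
                  ← IH2 c α γ (by omega) hαγ]
              all_goals simp
      · -- k2 : insert b, a, c  vs  b, c, a   (a < b ≤ c)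
        intro a b c hab hbc
        rcases sorted_split R b hR with hRb | ⟨Lb, β, S, hR1, hLb, hbβ, hLbs, hSs, hβS⟩
        · -- Case A : everything ≤ b, so b is appended
          rw [tInsert_app b R rs hRb]
          rcases sorted_split R a hR with hRa | ⟨L, δ, S, hR1, hL, haδ, hLs, hSs, hδS⟩
          · -- A1 : everything ≤ a
            rw [tInsert_bump' (show R ++ [b] = R ++ b :: [] from rfl) hRa hab rs,
                tInsert_app c (R ++ a :: []) (tInsert b rs)
                  (all_le_append (all_le_trans hRa (by omega))
                    (all_le_cons (by omega) (all_le_nil c))),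
                tInsert_app c (R ++ [b]) rs
                  (all_le_append (all_le_trans hRb hbc) (all_le_single hbc)),
                tInsert_bump' (show (R ++ [b]) ++ [c] = R ++ b :: [c] from by simp) hRa hab rs]
            all_goals simp
          · -- A2 : R = L ++ δ :: S with a < δ ≤ b
            subst hR1
            have hδb : δ ≤ b := hRb δ (by simp)
            have hSb : ∀ s ∈ S, s ≤ b := fun s hs => hRb s (by simp [hs])
            have hLbb : ∀ l ∈ L, l ≤ b := fun l hl => hRb l (by simp [hl])
            rw [tInsert_bump'
                  (show (L ++ δ :: S) ++ [b] = L ++ δ :: (S ++ [b]) from by simp) hL haδ rs,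
                tInsert_app c (L ++ a :: (S ++ [b])) (tInsert δ rs)
                  (all_le_append (all_le_trans hL (by omega)) (all_le_cons (by omega)
                    (all_le_append (all_le_trans hSb hbc) (all_le_single hbc)))),
                tInsert_app c ((L ++ δ :: S) ++ [b]) rs
                  (all_le_append (all_le_append (all_le_trans hLbb hbc)
                    (all_le_cons (by omega) (all_le_trans hSb hbc))) (all_le_single hbc)),
                tInsert_bump'
                  (show ((L ++ δ :: S) ++ [b]) ++ [c] = L ++ δ :: ((S ++ [b]) ++ [c])
                    from by simp) hL haδ rs]
            all_goals simp
        · -- Case C : R = Lb ++ β :: S with b < β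
          subst hR1
          rw [tInsert_bump' (rfl : Lb ++ β :: S = Lb ++ β :: S) hLb hbβ rs]
          rcases sorted_split Lb a hLbs with hLba | ⟨La, δ, N, hLb1, hLa, haδ, hLas, hNs, hδN⟩
          · -- C1 : all of Lb ≤ a
            rw [tInsert_bump' (rfl : Lb ++ b :: S = Lb ++ b :: S) hLba hab
                  (tInsert β rs)]
            rcases sorted_split S c hSs with hSc | ⟨M, γ, S₂, hS1, hM, hcγ, hMs, hS₂s, hγS₂⟩
            · -- C1-i : all of S ≤ c
              rw [tInsert_app c (Lb ++ a :: S) (tInsert b (tInsert β rs))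
                    (all_le_append (all_le_trans hLba (by omega))
                      (all_le_cons (by omega) hSc)),
                  tInsert_app c (Lb ++ b :: S) (tInsert β rs)
                    (all_le_append (all_le_trans hLb hbc) (all_le_cons hbc hSc)),
                  tInsert_bump'
                    (show (Lb ++ b :: S) ++ [c] = Lb ++ b :: (S ++ [c]) from by simp)
                    hLba hab (tInsert β rs)]
              all_goals simp
            · -- C1-ii : S = M ++ γ :: S₂ with c < γ
              subst hS1
              have hβγ : β ≤ γ := hβS γ (by simp)
              have hMc : ∀ s ∈ M, s ≤ c := hM
              rw [tInsert_bump'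
                    (show Lb ++ a :: (M ++ γ :: S₂) = (Lb ++ a :: M) ++ γ :: S₂ from by simp)
                    (all_le_append (all_le_trans hLba (by omega))
                      (all_le_cons (by omega) hMc)) hcγ (tInsert b (tInsert β rs)),
                  tInsert_bump'
                    (show Lb ++ b :: (M ++ γ :: S₂) = (Lb ++ b :: M) ++ γ :: S₂ from by simp)
                    (all_le_append (all_le_trans hLb hbc) (all_le_cons hbc hMc)) hcγ
                    (tInsert β rs),
                  tInsert_bump'
                    (show (Lb ++ b :: M) ++ c :: S₂ = Lb ++ b :: (M ++ c :: S₂) from by simp)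
                    hLba hab (tInsert γ (tInsert β rs)),
                  IH2 b β γ hbβ hβγ]
              all_goals simp
          · -- C2 : Lb = La ++ δ :: N with a < δ
            subst hLb1
            have hδb : δ ≤ b := hLb δ (by simp)
            have hNb : ∀ l ∈ N, l ≤ b := fun l hl => hLb l (by simp [hl])
            have hLab : ∀ l ∈ La, l ≤ b := fun l hl => hLb l (by simp [hl])
            rw [tInsert_bump'
                  (show (La ++ δ :: N) ++ b :: S = La ++ δ :: (N ++ b :: S) from by simp)
                  hLa haδ (tInsert β rs)]
            rcases sorted_split S c hSs with hSc | ⟨M, γ, S₂, hS1, hM, hcγ, hMs, hS₂s, hγS₂⟩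
            · -- C2-i : all of S ≤ c
              rw [tInsert_app c (La ++ a :: (N ++ b :: S)) (tInsert δ (tInsert β rs))
                    (all_le_append (all_le_trans hLa (by omega)) (all_le_cons (by omega)
                      (all_le_append (all_le_trans hNb hbc) (all_le_cons hbc hSc)))),
                  tInsert_app c ((La ++ δ :: N) ++ b :: S) (tInsert β rs)
                    (all_le_append (all_le_append (all_le_trans hLab hbc)
                      (all_le_cons (by omega) (all_le_trans hNb hbc)))
                      (all_le_cons hbc hSc)),
                  tInsert_bump'
                    (show ((La ++ δ :: N) ++ b :: S) ++ [c]
                      = La ++ δ :: ((N ++ b :: S) ++ [c]) from by simp)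
                    hLa haδ (tInsert β rs)]
              all_goals simp
            · -- C2-ii : S = M ++ γ :: S₂ with c < γ
              subst hS1
              have hβγ : β ≤ γ := hβS γ (by simp)
              have hMc : ∀ s ∈ M, s ≤ c := hM
              rw [tInsert_bump'
                    (show La ++ a :: (N ++ b :: (M ++ γ :: S₂))
                      = ((La ++ a :: N) ++ b :: M) ++ γ :: S₂ from by simp)
                    (all_le_append (all_le_append (all_le_trans hLa (by omega))
                      (all_le_cons (by omega) (all_le_trans hNb hbc)))
                      (all_le_cons hbc hMc)) hcγ (tInsert δ (tInsert β rs)),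
                  tInsert_bump'
                    (show (La ++ δ :: N) ++ b :: (M ++ γ :: S₂)
                      = ((La ++ δ :: N) ++ b :: M) ++ γ :: S₂ from by simp)
                    (all_le_append (all_le_append (all_le_trans hLab hbc)
                      (all_le_cons (by omega) (all_le_trans hNb hbc)))
                      (all_le_cons hbc hMc)) hcγ (tInsert β rs),
                  tInsert_bump'
                    (show ((La ++ δ :: N) ++ b :: M) ++ c :: S₂
                      = La ++ δ :: (N ++ b :: (M ++ c :: S₂)) from by simp)
                    hLa haδ (tInsert γ (tInsert β rs)),
                  IH2 δ β γ (by omega) hβγ]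
              all_goals simp


/-! ### P is invariant under Knuth equivalence -/

lemma tInsertW_triple (p q r : ℕ) (T : List (List ℕ)) :
    tInsertW [p, q, r] T = tInsert r (tInsert q (tInsert p T)) := rfl

lemma P_KStep {v w : List ℕ} (h : KStep v w) : P v = P w := by
  cases h with
  | k1 x y a b c h1 h2 =>
      rw [P_eq, P_eq, tInsertW_append, tInsertW_append, tInsertW_append, tInsertW_append]
      congr 1
      rw [tInsertW_triple, tInsertW_triple]
      exact (key (tInsertW x []) (tInsertW_sorted x (by simp))).1 a b c h1 h2
  | k2 x y a b c h1 h2 =>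
      rw [P_eq, P_eq, tInsertW_append, tInsertW_append, tInsertW_append, tInsertW_append]
      congr 1
      rw [tInsertW_triple, tInsertW_triple]
      exact (key (tInsertW x []) (tInsertW_sorted x (by simp))).2 a b c h1 h2

lemma P_KEquiv {v w : List ℕ} (h : KEquiv v w) : P v = P w := by
  induction h with
  | rel a b hab => exact P_KStep hab
  | refl a => rfl
  | symm a b _ ih => exact ih.symm
  | trans a b c _ _ ih1 ih2 => exact ih1.trans ih2

/-! ### the decreasing word and the glued column -/

def Wd (m n : ℕ) : List ℕ := (List.range n).map (fun i => m - i)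

@[simp] lemma Wd_zero (m : ℕ) : Wd m 0 = [] := rfl

lemma Wd_succ (m j : ℕ) : Wd m (j + 1) = Wd m j ++ [m - j] := by
  simp [Wd, List.range_succ]

def pre : ℕ → List (List ℕ) → ℕ → List (List ℕ)
  | _, T, 0 => T
  | k, [], n + 1 => [k] :: pre (k + 1) [] n
  | k, r :: rs, n + 1 => (k :: r) :: pre (k + 1) rs n

@[simp] lemma pre_zero (k : ℕ) (T : List (List ℕ)) : pre k T 0 = T := by cases T <;> rfl

lemma pre_comm (n : ℕ) : ∀ (k : ℕ) (T : List (List ℕ)) (x : ℕ), k ≤ x →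
    tInsert x (pre k T n) = pre k (tInsert x T) n := by
  induction n with
  | zero => intro k T x _; rw [pre_zero, pre_zero]
  | succ n ih =>
      intro k T x hkx
      cases T with
      | nil =>
          show tInsert x ([k] :: pre (k + 1) [] n) = pre k [[x]] (n + 1)
          rw [tInsert_app x [k] _ (all_le_single hkx)]
          rfl
      | cons r rs =>
          show tInsert x ((k :: r) :: pre (k + 1) rs n) = pre k (tInsert x (r :: rs)) (n + 1)
          have hpeel : rowInsert x (k :: r) = (k :: (rowInsert x r).1, (rowInsert x r).2) := by
            simp [rowInsert, show ¬ x < k from by omega]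
          rcases hro : rowInsert x r with ⟨r', o⟩
          rcases o with _ | y
          · have e1 : tInsert x ((k :: r) :: pre (k + 1) rs n)
                = (k :: r') :: pre (k + 1) rs n := by
              simp [tInsert, hpeel, hro]
            have e2 : tInsert x (r :: rs) = r' :: rs := by simp [tInsert, hro]
            rw [e1, e2]; rfl
          · have hy : k + 1 ≤ y := by
              have := rowInsert_snd_gt (R := r) (x := x) (y := y) (by rw [hro])
              omega
            have e1 : tInsert x ((k :: r) :: pre (k + 1) rs n)
                = (k :: r') :: tInsert y (pre (k + 1) rs n) := by
              simp [tInsert, hpeel, hro]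
            have e2 : tInsert x (r :: rs) = r' :: tInsert y rs := by simp [tInsert, hro]
            rw [e1, e2, ih (k + 1) rs y hy]; rfl

lemma colStep : ∀ (n k : ℕ), tInsert k (pre (k + 1) [] n) = pre k [] (n + 1) := by
  intro n
  induction n with
  | zero => intro k; rfl
  | succ n ih =>
      intro k
      rw [show pre (k + 1) [] (n + 1) = [k + 1] :: pre (k + 2) [] n from rfl,
          tInsert_bump' (show [k + 1] = [] ++ (k + 1) :: [] from rfl) (all_le_nil k)
            (by omega) _, ih (k + 1)]
      rfl

def insSorted (x : ℕ) : List ℕ → List ℕ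
  | [] => [x]
  | r :: rest => if x < r then x :: r :: rest else r :: insSorted x rest

lemma insSorted_all_le {R : List ℕ} {x : ℕ} (h : ∀ r ∈ R, x ≤ r) :
    insSorted x R = x :: R := by
  induction R with
  | nil => rfl
  | cons r R ih =>
      by_cases hx : x < r
      · simp [insSorted, hx]
      · have hxr : x = r := le_antisymm (h r (by simp)) (by omega)
        subst hxr
        rw [show insSorted x (x :: R) = x :: insSorted x R from by simp [insSorted],
            ih (fun r hr => h r (by simp [hr]))]

lemma insSorted_all_ge {R : List ℕ} {x : ℕ} (h : ∀ r ∈ R, r ≤ x) :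
    insSorted x R = R ++ [x] := by
  induction R with
  | nil => rfl
  | cons r R ih =>
      have : ¬ x < r := by have := h r (by simp); omega
      rw [show insSorted x (r :: R) = r :: insSorted x R from by simp [insSorted, this],
          ih (fun r hr => h r (by simp [hr]))]
      simp

lemma rowInsert_insSorted (k : ℕ) (R : List ℕ) (hs : R.Pairwise (· ≤ ·)) :
    rowInsert k (insSorted (k + 1) R) = (insSorted k R, some (k + 1)) := by
  induction R with
  | nil => simp [insSorted, rowInsert]
  | cons r R ih =>
      rw [List.pairwise_cons] at hs
      by_cases h1 : k + 1 < r
      · rw [show insSorted (k + 1) (r :: R) = (k + 1) :: r :: R from by simp [insSorted, h1],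
            show rowInsert k ((k + 1) :: r :: R) = (k :: r :: R, some (k + 1)) from by
              simp [rowInsert],
            show insSorted k (r :: R) = k :: r :: R from by
              simp [insSorted, show k < r from by omega]]
      · by_cases h2 : r ≤ k
        · rw [show insSorted (k + 1) (r :: R) = r :: insSorted (k + 1) R from by
                simp [insSorted, show ¬ k + 1 < r from by omega],
              show rowInsert k (r :: insSorted (k + 1) R)
                  = (r :: (rowInsert k (insSorted (k + 1) R)).1,
                     (rowInsert k (insSorted (k + 1) R)).2) from by
                simp [rowInsert, show ¬ k < r from by omega],
              ih hs.2,
              show insSorted k (r :: R) = r :: insSorted k R from by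
                simp [insSorted, show ¬ k < r from by omega]]
        · have hr : r = k + 1 := by omega
          subst hr
          rw [show insSorted (k + 1) ((k + 1) :: R) = (k + 1) :: insSorted (k + 1) R from by
                simp [insSorted],
              insSorted_all_le hs.1,
              show rowInsert k ((k + 1) :: (k + 1) :: R) = (k :: (k + 1) :: R, some (k + 1))
                from by simp [rowInsert],
              show insSorted k ((k + 1) :: R) = k :: (k + 1) :: R from by simp [insSorted]]

lemma innerRow (m : ℕ) : ∀ (j : ℕ), j ≤ m → ∀ (R : List ℕ) (rs : List (List ℕ)),
    (∀ r ∈ R, r ≤ m) → R.Pairwise (· ≤ ·) →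
    tInsertW (Wd m (j + 1)) (R :: rs) = insSorted (m - j) R :: tInsertW (Wd m j) rs := by
  intro j
  induction j with
  | zero =>
      intro _ R rs hR _
      rw [show Wd m 1 = [] ++ [m - 0] from (Wd_succ m 0), show m - 0 = m from rfl]
      rw [show tInsertW ([] ++ [m]) (R :: rs) = tInsert m (R :: rs) from rfl,
          tInsert_app m R rs hR, insSorted_all_ge hR]
      rfl
  | succ j ih =>
      intro hj R rs hR hsR
      have hj' : j ≤ m := by omega
      rw [Wd_succ m (j + 1), tInsertW_snoc, ih hj' R rs hR hsR]
      have hrow : rowInsert (m - (j + 1)) (insSorted (m - j) R)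
          = (insSorted (m - (j + 1)) R, some (m - j)) := by
        have := rowInsert_insSorted (m - (j + 1)) R hsR
        rw [show m - (j + 1) + 1 = m - j from by omega] at this
        exact this
      rw [show tInsert (m - (j + 1)) (insSorted (m - j) R :: tInsertW (Wd m j) rs)
            = insSorted (m - (j + 1)) R :: tInsert (m - j) (tInsertW (Wd m j) rs) from by
          simp [tInsert, hrow],
        ← tInsertW_snoc, ← Wd_succ]

/-! ### lower bounds on entries of rows -/

def lowBd : ℕ → List (List ℕ) → Prop
  | _, [] => True
  | k, R :: rs => (∀ v ∈ R, k ≤ v) ∧ lowBd (k + 1) rs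

lemma lowBd_tInsert : ∀ (T : List (List ℕ)) (k x : ℕ), k ≤ x → lowBd k T →
    lowBd k (tInsert x T) := by
  intro T
  induction T with
  | nil =>
      intro k x h _
      exact ⟨by simpa using h, trivial⟩
  | cons R rs ih =>
      intro k x h hlb
      rcases hro : rowInsert x R with ⟨r', o⟩
      have hmem : ∀ v ∈ r', k ≤ v := by
        intro v hv
        have : v ∈ (rowInsert x R).1 := by rw [hro]; exact hv
        rcases rowInsert_mem this with h' | h'
        · omega
        · exact hlb.1 v h'
      rcases o with _ | y
      · rw [show tInsert x (R :: rs) = r' :: rs from by simp [tInsert, hro]]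
        exact ⟨hmem, hlb.2⟩
      · have hy : k + 1 ≤ y := by
          have := rowInsert_snd_gt (R := R) (x := x) (y := y) (by rw [hro])
          omega
        rw [show tInsert x (R :: rs) = r' :: tInsert y rs from by simp [tInsert, hro]]
        exact ⟨hmem, ih (k + 1) y hy hlb.2⟩

lemma lowBd_tInsertW (w : List ℕ) (hw : ∀ x ∈ w, 0 < x) :
    ∀ T, lowBd 1 T → lowBd 1 (tInsertW w T) := by
  induction w with
  | nil => intro T h; exact h
  | cons x w ih =>
      intro T h
      exact ih (fun y hy => hw y (by simp [hy])) (tInsert x T)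
        (lowBd_tInsert T 1 x (hw x (by simp)) h)

lemma lowBd_P (w : List ℕ) (hw : ∀ x ∈ w, 0 < x) : lowBd 1 (P w) :=
  lowBd_tInsertW w hw [] trivial

lemma lowBd_getD : ∀ (T : List (List ℕ)) (k : ℕ), lowBd k T →
    ∀ i, ∀ v ∈ T.getD i [], k + i ≤ v := by
  intro T
  induction T with
  | nil => intro k _ i v hv; simp at hv
  | cons R rs ih =>
      intro k h i v hv
      cases i with
      | zero => have := h.1 v (by simpa using hv); omega
      | succ i =>
          have := ih (k + 1) h.2 i v (by simpa using hv)
          omega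

/-! ### the stuck lemma -/

lemma stuck (m : ℕ) : ∀ (j : ℕ), j ≤ m → ∀ (R : List ℕ) (rs : List (List ℕ)),
    (∃ r ∈ R, m < r) →
    ∃ R' rs', tInsertW (Wd m (j + 1)) (R :: rs) = R' :: rs' ∧ R'.length = R.length ∧
      (m - j) ∈ R' := by
  intro j
  induction j with
  | zero =>
      intro _ R rs hex
      obtain ⟨R', y, heq, hlen, hmem⟩ := rowInsert_bumps hex
      refine ⟨R', tInsert y rs, ?_, hlen, by simpa using hmem⟩
      rw [show Wd m 1 = [] ++ [m - 0] from (Wd_succ m 0)]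
      show tInsert (m - 0) (R :: rs) = R' :: tInsert y rs
      simp [tInsert, show m - 0 = m from rfl, heq]
  | succ j ih =>
      intro hj R rs hex
      obtain ⟨R', rs', heq, hlen, hmem⟩ := ih (by omega) R rs hex
      obtain ⟨R'', y, heq2, hlen2, hmem2⟩ :=
        rowInsert_bumps (R := R') (x := m - (j + 1)) ⟨m - j, hmem, by omega⟩
      refine ⟨R'', tInsert y rs', ?_, hlen2.trans hlen, hmem2⟩
      rw [Wd_succ m (j + 1), tInsertW_snoc, heq]
      simp [tInsert, heq2]

/-! ### the core equivalence -/

lemma colEmpty (m : ℕ) : ∀ (j : ℕ), j ≤ m →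
    tInsertW (Wd m (j + 1)) ([] : List (List ℕ)) = pre (m - j) [] (j + 1) := by
  intro j
  induction j with
  | zero => intro _; rfl
  | succ j ih =>
      intro hj
      rw [Wd_succ m (j + 1), tInsertW_snoc, ih (by omega),
          show m - j = (m - (j + 1)) + 1 from by omega, colStep]

lemma core (m : ℕ) : ∀ (T : List (List ℕ)) (j : ℕ), j ≤ m →
    (∀ i, ∀ v ∈ T.getD i [], (m - j) + i ≤ v) → (∀ r ∈ T, r.Pairwise (· ≤ ·)) →
    (tInsertW (Wd m (j + 1)) T = pre (m - j) T (j + 1) ↔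
      ∀ i < j + 1, ∀ x ∈ T.getD i [], x ≤ m) := by
  intro T
  induction T with
  | nil =>
      intro j hj _ _
      constructor
      · intro _ i _ x hx; simp at hx
      · intro _; exact colEmpty m j hj
  | cons R rs ihT =>
      intro j hj hlow hsort
      have hR0 : ∀ v ∈ R, m - j ≤ v := by
        intro v hv
        have := hlow 0 v (by simpa using hv); omega
      by_cases hRm : ∀ x ∈ R, x ≤ m
      · rw [innerRow m j hj R rs hRm (hsort R (by simp)), insSorted_all_le hR0,
            show pre (m - j) (R :: rs) (j + 1) = ((m - j) :: R) :: pre (m - j + 1) rs j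
              from rfl]
        cases j with
        | zero =>
            constructor
            · intro _ i hi x hx
              interval_cases i
              exact hRm x (by simpa using hx)
            · intro _; rw [pre_zero]; rfl
        | succ j' =>
            have hj'm : j' ≤ m := by omega
            have hlow' : ∀ i, ∀ v ∈ rs.getD i [], (m - j') + i ≤ v := by
              intro i v hv
              have := hlow (i + 1) v (by simpa using hv); omega
            have hiff := ihT j' hj'm hlow' (fun r hr => hsort r (by simp [hr]))
            have e : m - (j' + 1) + 1 = m - j' := by omega
            rw [e]
            constructor
            · intro h i hi x hx
              cases i with
              | zero => exact hRm x (by simpa using hx)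
              | succ i =>
                  have htail : tInsertW (Wd m (j' + 1)) rs = pre (m - j') rs (j' + 1) :=
                    (List.cons.inj h).2
                  exact hiff.1 htail i (by omega) x (by simpa using hx)
            · intro h
              have htail : tInsertW (Wd m (j' + 1)) rs = pre (m - j') rs (j' + 1) :=
                hiff.2 (fun i hi x hx => h (i + 1) (by omega) x (by simpa using hx))
              rw [htail]
      · push_neg at hRm
        obtain ⟨r₀, hr₀, hr₀m⟩ := hRm
        obtain ⟨R', rs', heq, hlen, _⟩ := stuck m j hj R rs ⟨r₀, hr₀, by omega⟩
        rw [heq, show pre (m - j) (R :: rs) (j + 1) = ((m - j) :: R) :: pre (m - j + 1) rs j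
              from rfl]
        constructor
        · intro h
          exfalso
          have := congrArg List.length (List.cons.inj h).1
          simp [hlen] at this
        · intro h
          exfalso
          have := h 0 (by omega) r₀ (by simpa using hr₀)
          omega

/-! ### assembling: P (u ++ w) is the glued column -/

lemma Puw (m : ℕ) (hm : 0 < m) : ∀ (w : List ℕ), (∀ x ∈ w, 0 < x) →
    P (Wd m m ++ w) = pre 1 (P w) m := by
  intro w
  induction w using List.reverseRecOn with
  | nil =>
      intro _
      have := colEmpty m (m - 1) (by omega)
      rw [show m - 1 + 1 = m from by omega, show m - (m - 1) = 1 from by omega] at this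
      simpa [P_eq] using this
  | append_singleton w x ih =>
      intro hw
      have hx : 0 < x := hw x (by simp)
      have hw' : ∀ y ∈ w, 0 < y := fun y hy => hw y (by simp [hy])
      rw [show Wd m m ++ (w ++ [x]) = (Wd m m ++ w) ++ [x] from by simp,
          P_append (Wd m m ++ w) [x],
          show tInsertW [x] (P (Wd m m ++ w)) = tInsert x (P (Wd m m ++ w)) from rfl,
          ih hw', pre_comm m 1 (P w) x hx, P_append w [x]]
      rfl


lemma mem_Cent_iff (m : ℕ) (hm : 0 < m) (w : List ℕ) (hw : ∀ x ∈ w, 0 < x) :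
    w ∈ Cent (Wd m m) ↔ ∀ i < m, ∀ x ∈ (P w).getD i [], x ≤ m := by
  have hPs := P_sorted w
  have hgetD := lowBd_getD (P w) 1 (lowBd_P w hw)
  have hcore := core m (P w) (m - 1) (by omega)
      (fun i v hv => by have := hgetD i v hv; omega) hPs
  rw [show m - 1 + 1 = m from by omega, show m - (m - 1) = 1 from by omega] at hcore
  have hPuw := Puw m hm w hw
  have hPwu : P (w ++ Wd m m) = tInsertW (Wd m m) (P w) := P_append _ _
  constructor
  · intro hC
    have hPP : P (Wd m m ++ w) = P (w ++ Wd m m) := P_KEquiv hC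
    refine hcore.1 ?_
    calc tInsertW (Wd m m) (P w) = P (w ++ Wd m m) := hPwu.symm
      _ = P (Wd m m ++ w) := hPP.symm
      _ = pre 1 (P w) m := hPuw
  · intro hcond
    have h1 := hcore.2 hcond
    have hPP : P (Wd m m ++ w) = P (w ++ Wd m m) := by rw [hPuw, hPwu, h1]
    have k1 := kReadP (Wd m m ++ w)
    have k2' : KEquiv (readT (P (Wd m m ++ w))) (w ++ Wd m m) := by
      rw [hPP]; exact (kReadP (w ++ Wd m m)).symm
    exact k1.trans k2'

end Plactic

open Plactic in
theorem stmt_13 (m : ℕ) (hm : 0 < m) (w : List ℕ) (hw : ∀ x ∈ w, 0 < x) :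
    w ∈ Cent ((List.range m).map (fun i => m - i)) ↔
      ∀ i < m, ∀ x ∈ row w i, x ≤ m := by
  exact mem_Cent_iff m hm w hw
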